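/- For every real x with 0 ≤ x < 1/2, it holds that 2·(1/2 + x)^{1/2 + x/4}·(1/2 − x)^{1/2 − x/4} ≤ 1 − x². Equivalently, ln(2·(1/2 + x)^{1/2 + x/4}·(1/2 − x)^{1/2 − x/4}) ≤ ln(1 − x²). -/

import Mathlib

open Real Set

noncomputable def adaF (x : ℝ) : ℝ :=
  Real.log (1 - x ^ 2) - (1 / 2 + x / 4) * Real.log (1 / 2 + x)
    - (1 / 2 - x / 4) * Real.log (1 / 2 - x) - Real.log 2

noncomputable def adaF1 (x : ℝ) : ℝ :=
  -2 * x / (1 - x ^ 2) + (3 * x / 4) / (1 / 4 - x ^ 2)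
    + (1 / 4) * (Real.log (1 / 2 - x) - Real.log (1 / 2 + x))

noncomputable def adaF2 (x : ℝ) : ℝ :=
  -((2 + 2 * x ^ 2) / (1 - x ^ 2) ^ 2) + (3 / 16 + 3 * x ^ 2 / 4) / (1 / 4 - x ^ 2) ^ 2
    + (1 / 4) * (-(1 / (1 / 2 - x)) - 1 / (1 / 2 + x))

lemma adaF_hasDeriv (x : ℝ) (h1 : -(1 / 2) < x) (h2 : x < 1 / 2) :
    HasDerivAt adaF (adaF1 x) x := by
  have ha : (0:ℝ) < 1 / 2 + x := by linarith
  have hb : (0:ℝ) < 1 / 2 - x := by linarith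
  have hc : (0:ℝ) < 1 - x ^ 2 := by nlinarith
  have h4 : (0:ℝ) < 1 / 4 - x ^ 2 := by nlinarith
  have H1 : HasDerivAt (fun y : ℝ => 1 - y ^ 2) (-(2 * x)) x := by
    simpa using ((hasDerivAt_pow 2 x).const_sub 1)
  have H2 : HasDerivAt (fun y : ℝ => 1 / 2 + y) 1 x := by
    simpa using (hasDerivAt_id x).const_add (1/2 : ℝ)
  have H3 : HasDerivAt (fun y : ℝ => 1 / 2 - y) (-1) x := by
    simpa using (hasDerivAt_id x).const_sub (1/2 : ℝ)
  have L1 : HasDerivAt (fun y : ℝ => Real.log (1 - y ^ 2)) (-(2 * x) / (1 - x ^ 2)) x :=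
    H1.log hc.ne'
  have L2 : HasDerivAt (fun y : ℝ => Real.log (1 / 2 + y)) (1 / (1 / 2 + x)) x := H2.log ha.ne'
  have L3 : HasDerivAt (fun y : ℝ => Real.log (1 / 2 - y)) (-1 / (1 / 2 - x)) x := H3.log hb.ne'
  have C2 : HasDerivAt (fun y : ℝ => 1 / 2 + y / 4) (1 / 4) x := by
    simpa using ((hasDerivAt_id x).div_const 4).const_add (1/2 : ℝ)
  have C3 : HasDerivAt (fun y : ℝ => 1 / 2 - y / 4) (-(1 / 4)) x := by
    simpa using ((hasDerivAt_id x).div_const 4).const_sub (1/2 : ℝ)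
  have M2 := C2.mul L2
  have M3 := C3.mul L3
  have := (((L1.sub M2).sub M3).sub_const (Real.log 2))
  refine this.congr_deriv ?_
  unfold adaF1
  have key : (3 * x / 4) / (1 / 4 - x ^ 2)
      = (1 / 2 - x / 4) / (1 / 2 - x) - (1 / 2 + x / 4) / (1 / 2 + x) := by
    rw [div_sub_div _ _ hb.ne' ha.ne', div_eq_div_iff h4.ne' (mul_ne_zero hb.ne' ha.ne')]
    ring
  rw [key]
  ring

lemma adaF1_hasDeriv (x : ℝ) (h1 : -(1 / 2) < x) (h2 : x < 1 / 2) :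
    HasDerivAt adaF1 (adaF2 x) x := by
  have ha : (0:ℝ) < 1 / 2 + x := by linarith
  have hb : (0:ℝ) < 1 / 2 - x := by linarith
  have hc : (0:ℝ) < 1 - x ^ 2 := by nlinarith
  have h4 : (0:ℝ) < 1 / 4 - x ^ 2 := by nlinarith
  have H1 : HasDerivAt (fun y : ℝ => 1 - y ^ 2) (-(2 * x)) x := by
    simpa using ((hasDerivAt_pow 2 x).const_sub 1)
  have H1' : HasDerivAt (fun y : ℝ => 1 / 4 - y ^ 2) (-(2 * x)) x := by
    simpa using ((hasDerivAt_pow 2 x).const_sub (1/4 : ℝ))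
  have H2 : HasDerivAt (fun y : ℝ => 1 / 2 + y) 1 x := by
    simpa using (hasDerivAt_id x).const_add (1/2 : ℝ)
  have H3 : HasDerivAt (fun y : ℝ => 1 / 2 - y) (-1) x := by
    simpa using (hasDerivAt_id x).const_sub (1/2 : ℝ)
  have N1 : HasDerivAt (fun y : ℝ => -2 * y) (-2) x := by
    simpa using (hasDerivAt_id x).const_mul (-2 : ℝ)
  have N2 : HasDerivAt (fun y : ℝ => 3 * y / 4) (3 / 4) x := by
    simpa using ((hasDerivAt_id x).const_mul (3 : ℝ)).div_const 4
  have D1 := N1.div H1 hc.ne'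
  have D2 := N2.div H1' h4.ne'
  have L2 : HasDerivAt (fun y : ℝ => Real.log (1 / 2 + y)) (1 / (1 / 2 + x)) x := H2.log ha.ne'
  have L3 : HasDerivAt (fun y : ℝ => Real.log (1 / 2 - y)) (-1 / (1 / 2 - x)) x := H3.log hb.ne'
  have := (D1.add D2).add ((L3.sub L2).const_mul (1/4 : ℝ))
  refine this.congr_deriv ?_
  unfold adaF2
  ring

lemma adaF2_nonneg (x : ℝ) (h0 : 0 ≤ x) (h2 : x < 1 / 2) : 0 ≤ adaF2 x := by
  have hb : (0:ℝ) < 1 / 2 - x := by linarith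
  have ha : (0:ℝ) < 1 / 2 + x := by linarith
  have hc : (0:ℝ) < 1 - x ^ 2 := by nlinarith
  have h4 : (0:ℝ) < 1 / 4 - x ^ 2 := by nlinarith
  have hD : (8 * (1 / 4 - x ^ 2) ^ 2 * (1 - x ^ 2) ^ 2 : ℝ) ≠ 0 := by positivity
  have e1 : (2 + 2 * x ^ 2) / (1 - x ^ 2) ^ 2
      = ((2 + 2 * x ^ 2) * (8 * (1 / 4 - x ^ 2) ^ 2))
        / (8 * (1 / 4 - x ^ 2) ^ 2 * (1 - x ^ 2) ^ 2) := by
    rw [div_eq_div_iff (by positivity) hD]; ring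
  have e2 : (3 / 16 + 3 * x ^ 2 / 4) / (1 / 4 - x ^ 2) ^ 2
      = ((3 / 16 + 3 * x ^ 2 / 4) * (8 * (1 - x ^ 2) ^ 2))
        / (8 * (1 / 4 - x ^ 2) ^ 2 * (1 - x ^ 2) ^ 2) := by
    rw [div_eq_div_iff (by positivity) hD]; ring
  have e3 : (1 : ℝ) / (1 / 2 - x) + 1 / (1 / 2 + x)
      = (8 * (1 / 4 - x ^ 2) * (1 - x ^ 2) ^ 2)
        / (8 * (1 / 4 - x ^ 2) ^ 2 * (1 - x ^ 2) ^ 2) := by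
    rw [div_add_div _ _ hb.ne' ha.ne', div_eq_div_iff (mul_ne_zero hb.ne' ha.ne') hD]; ring
  have key : adaF2 x
      = x ^ 2 * (13 - 23 * x ^ 2 - 8 * x ^ 4) / (8 * (1 / 4 - x ^ 2) ^ 2 * (1 - x ^ 2) ^ 2) := by
    unfold adaF2
    rw [show (-(1 / (1 / 2 - x)) - 1 / (1 / 2 + x) : ℝ)
        = -((1 : ℝ) / (1 / 2 - x) + 1 / (1 / 2 + x)) from by ring, e1, e2, e3]
    ring
  rw [key]
  apply div_nonneg
  · have hx2 : x ^ 2 ≤ 1 / 4 := by nlinarith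
    have hx4 : x ^ 4 ≤ 1 / 16 := by nlinarith [sq_nonneg (x ^ 2 - 1 / 4)]
    have : (0:ℝ) ≤ 13 - 23 * x ^ 2 - 8 * x ^ 4 := by nlinarith
    exact mul_nonneg (sq_nonneg x) this
  · positivity

lemma adaF1_nonneg (x : ℝ) (h0 : 0 ≤ x) (h2 : x < 1 / 2) : 0 ≤ adaF1 x := by
  have mono : MonotoneOn adaF1 (Set.Ico (0:ℝ) (1/2)) := by
    apply monotoneOn_of_deriv_nonneg (convex_Ico _ _)
    · intro y hy
      exact (adaF1_hasDeriv y (by linarith [hy.1]) hy.2).continuousAt.continuousWithinAt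
    · rw [interior_Ico]
      intro y hy
      exact (adaF1_hasDeriv y (by linarith [hy.1]) hy.2).differentiableAt.differentiableWithinAt
    · rw [interior_Ico]
      intro y hy
      rw [(adaF1_hasDeriv y (by linarith [hy.1]) hy.2).deriv]
      exact adaF2_nonneg y (le_of_lt hy.1) hy.2
  have h00 : adaF1 0 = 0 := by
    unfold adaF1
    norm_num
  have := mono (by constructor <;> norm_num) ⟨h0, h2⟩ h0
  rwa [h00] at this

lemma adaF_nonneg (x : ℝ) (h0 : 0 ≤ x) (h2 : x < 1 / 2) : 0 ≤ adaF x := by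
  have mono : MonotoneOn adaF (Set.Ico (0:ℝ) (1/2)) := by
    apply monotoneOn_of_deriv_nonneg (convex_Ico _ _)
    · intro y hy
      exact (adaF_hasDeriv y (by linarith [hy.1]) hy.2).continuousAt.continuousWithinAt
    · rw [interior_Ico]
      intro y hy
      exact (adaF_hasDeriv y (by linarith [hy.1]) hy.2).differentiableAt.differentiableWithinAt
    · rw [interior_Ico]
      intro y hy
      rw [(adaF_hasDeriv y (by linarith [hy.1]) hy.2).deriv]
      exact adaF1_nonneg y (le_of_lt hy.1) hy.2
  have h00 : adaF 0 = 0 := by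
    unfold adaF
    norm_num
    rw [one_div, Real.log_inv]
    ring
  have := mono (by constructor <;> norm_num) ⟨h0, h2⟩ h0
  rwa [h00] at this

/-- **Key per-round analytic inequality in the AdaBoost analysis.**
For `0 ≤ x < 1/2`, `2·(1/2 + x)^(1/2 + x/4)·(1/2 - x)^(1/2 - x/4) ≤ 1 - x²`,
where `a ^ b` is the real power `exp(b·ln a)` for `a > 0`. -/
theorem per_round_inequality (x : ℝ) (hx0 : 0 ≤ x) (hx : x < 1 / 2) :
    2 * (1 / 2 + x) ^ ((1 : ℝ) / 2 + x / 4) * (1 / 2 - x) ^ ((1 : ℝ) / 2 - x / 4)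
      ≤ 1 - x ^ 2 := by
  have ha : (0:ℝ) < 1 / 2 + x := by linarith
  have hb : (0:ℝ) < 1 / 2 - x := by linarith
  have hc : (0:ℝ) < 1 - x ^ 2 := by nlinarith
  have hF := adaF_nonneg x hx0 hx
  unfold adaF at hF
  have hlog : Real.log 2 + (1 / 2 + x / 4) * Real.log (1 / 2 + x)
      + (1 / 2 - x / 4) * Real.log (1 / 2 - x) ≤ Real.log (1 - x ^ 2) := by linarith
  have e1 : (1 / 2 + x) ^ ((1 : ℝ) / 2 + x / 4)
      = Real.exp (((1 : ℝ) / 2 + x / 4) * Real.log (1 / 2 + x)) := by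
    rw [Real.rpow_def_of_pos ha]; exact congrArg Real.exp (mul_comm _ _)
  have e2 : (1 / 2 - x) ^ ((1 : ℝ) / 2 - x / 4)
      = Real.exp (((1 : ℝ) / 2 - x / 4) * Real.log (1 / 2 - x)) := by
    rw [Real.rpow_def_of_pos hb]; exact congrArg Real.exp (mul_comm _ _)
  calc 2 * (1 / 2 + x) ^ ((1 : ℝ) / 2 + x / 4) * (1 / 2 - x) ^ ((1 : ℝ) / 2 - x / 4)
      = Real.exp (Real.log 2 + (((1 : ℝ) / 2 + x / 4) * Real.log (1 / 2 + x)
          + ((1 : ℝ) / 2 - x / 4) * Real.log (1 / 2 - x))) := by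
        rw [e1, e2, Real.exp_add, Real.exp_log (show (0:ℝ) < 2 by norm_num), mul_assoc,
          Real.exp_add]
    _ ≤ Real.exp (Real.log (1 - x ^ 2)) := Real.exp_le_exp.mpr (by linarith)
    _ = 1 - x ^ 2 := Real.exp_log hc
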